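/- Fix L ≥ 1 and let S_L = {(ℓ,i) : 1 ≤ ℓ ≤ L, i odd, 1 ≤ i ≤ 2^ℓ − 1}, with points x_{ℓ,i} = i·2^{−ℓ} ∈ (0,1) ordered lexicographically by (ℓ,i). Let p, q : (0,1) → ℝ be strictly positive with p/q strictly increasing, set k(x,y) = p(min(x,y))·q(max(x,y)), and let K be the S_L × S_L matrix K_{(ℓ,i),(ℓ',i')} = k(x_{ℓ,i}, x_{ℓ',i'}). Then there exists an S_L × S_L matrix C, upper triangular with respect to the lexicographic order, with at most 3 nonzero entries per column and Cᵀ·K·C = I, such that additionally for every x ∈ (0,1) the hierarchical feature vector φ(x) defined by φ_{(ℓ,i)}(x) = Σ_{(ℓ',i') ∈ S_L} k(x, x_{ℓ',i'})·C_{(ℓ',i'),(ℓ,i)} has at most L nonzero entries; more precisely, φ_{(ℓ,i)}(x) ≠ 0 implies (i−1)·2^{−ℓ} < x < (i+1)·2^{−ℓ}. -/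

import Mathlib

open Finset Matrix

namespace DHF

noncomputable def mv (v : ℕ × ℕ) : ℝ := (v.2 : ℝ) / 2 ^ v.1
noncomputable def av (v : ℕ × ℕ) : ℝ := ((v.2 : ℝ) - 1) / 2 ^ v.1
noncomputable def bv (v : ℕ × ℕ) : ℝ := ((v.2 : ℝ) + 1) / 2 ^ v.1

def dhfS (L : ℕ) (v : ℕ × ℕ) : Prop :=
  1 ≤ v.1 ∧ v.1 ≤ L ∧ Odd v.2 ∧ 1 ≤ v.2 ∧ v.2 ≤ 2 ^ v.1 - 1

lemma two_pow_pos (n : ℕ) : (0:ℝ) < 2 ^ n := by positivity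

lemma av_lt_mv (v : ℕ × ℕ) : av v < mv v := by
  unfold av mv; apply div_lt_div_of_pos_right ?_ (two_pow_pos v.1) <;> linarith

lemma mv_lt_bv (v : ℕ × ℕ) : mv v < bv v := by
  unfold mv bv; apply div_lt_div_of_pos_right ?_ (two_pow_pos v.1) <;> linarith

lemma av_ne_mv (v : ℕ × ℕ) : av v ≠ mv v := ne_of_lt (av_lt_mv v)
lemma mv_ne_bv (v : ℕ × ℕ) : mv v ≠ bv v := ne_of_lt (mv_lt_bv v)
lemma av_ne_bv (v : ℕ × ℕ) : av v ≠ bv v := ne_of_lt ((av_lt_mv v).trans (mv_lt_bv v))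

lemma mv_pos {v : ℕ × ℕ} (h : 1 ≤ v.2) : 0 < mv v := by
  unfold mv
  apply div_pos _ (two_pow_pos v.1)
  exact_mod_cast Nat.lt_of_lt_of_le Nat.zero_lt_one h

lemma mv_lt_one {v : ℕ × ℕ} (h : v.2 ≤ 2 ^ v.1 - 1) : mv v < 1 := by
  unfold mv
  rw [div_lt_one (two_pow_pos v.1)]
  have h2 : v.2 < 2 ^ v.1 := lt_of_le_of_lt h (Nat.sub_lt (by positivity) one_pos)
  exact_mod_cast h2

lemma av_nonneg {v : ℕ × ℕ} (h : 1 ≤ v.2) : 0 ≤ av v := by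
  unfold av
  apply div_nonneg _ (two_pow_pos v.1).le
  have : (1:ℝ) ≤ v.2 := by exact_mod_cast h
  linarith

lemma bv_le_one {v : ℕ × ℕ} (h : v.2 ≤ 2 ^ v.1 - 1) : bv v ≤ 1 := by
  unfold bv
  rw [div_le_one (two_pow_pos v.1)]
  have h2 : v.2 + 1 ≤ 2 ^ v.1 := by
    have := Nat.one_le_two_pow (n := v.1)
    omega
  have : ((v.2 + 1 : ℕ) : ℝ) ≤ ((2 ^ v.1 : ℕ) : ℝ) := by exact_mod_cast h2
  push_cast at this
  linarith

lemma av_pos {v : ℕ × ℕ} (h : 1 < v.2) : 0 < av v := by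
  unfold av
  apply div_pos _ (two_pow_pos v.1)
  have : (1:ℝ) < v.2 := by exact_mod_cast h
  linarith

lemma av_eq_zero {v : ℕ × ℕ} (h : v.2 = 1) : av v = 0 := by
  unfold av; rw [h]; norm_num

lemma bv_lt_one {v : ℕ × ℕ} (h : v.2 < 2 ^ v.1 - 1) : bv v < 1 := by
  unfold bv
  rw [div_lt_one (two_pow_pos v.1)]
  have h2 : v.2 + 1 < 2 ^ v.1 := by omega
  have : ((v.2 + 1 : ℕ) : ℝ) < ((2 ^ v.1 : ℕ) : ℝ) := by exact_mod_cast h2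
  push_cast at this
  linarith

lemma bv_eq_one {v : ℕ × ℕ} (h1 : 1 ≤ v.1) (h : v.2 = 2 ^ v.1 - 1) : bv v = 1 := by
  unfold bv
  rw [div_eq_one_iff_eq (ne_of_gt (two_pow_pos v.1))]
  have h2 : v.2 + 1 = 2 ^ v.1 := by
    have := Nat.one_le_two_pow (n := v.1)
    omega
  have : ((v.2 + 1 : ℕ) : ℝ) = ((2 ^ v.1 : ℕ) : ℝ) := by exact_mod_cast h2
  push_cast at this
  linarith

-- injectivity of mv on odd second components
lemma odd_mul_pow_eq {a b t : ℕ} (hb : Odd b) (h : a * 2 ^ t = b) : t = 0 ∧ a = b := by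
  rcases Nat.eq_zero_or_pos t with ht | ht
  · constructor; exact ht; simpa [ht] using h
  · exfalso
    have : 2 ∣ b := by
      rw [← h]
      exact Dvd.dvd.mul_left (dvd_pow_self 2 (Nat.pos_iff_ne_zero.mp ht)) a
    rcases hb with ⟨c, hc⟩
    omega

lemma mv_nat_eq {v w : ℕ × ℕ} (h : mv v = mv w) :
    v.2 * 2 ^ w.1 = w.2 * 2 ^ v.1 := by
  unfold mv at h
  have h2 : (v.2 : ℝ) * 2 ^ w.1 = (w.2 : ℝ) * 2 ^ v.1 := by
    field_simp at h
    linarith [h]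
  exact_mod_cast h2

lemma mv_inj {v w : ℕ × ℕ} (hv : Odd v.2) (hw : Odd w.2) (h : mv v = mv w) : v = w := by
  have hn := mv_nat_eq h
  rcases le_total v.1 w.1 with hle | hle
  · obtain ⟨d, hd⟩ : ∃ d, w.1 = d + v.1 := ⟨w.1 - v.1, (Nat.sub_add_cancel hle).symm⟩
    rw [hd, pow_add, ← mul_assoc] at hn
    have hc := Nat.eq_of_mul_eq_mul_right (by positivity : 0 < 2 ^ v.1) hn
    obtain ⟨hd0, hab⟩ := odd_mul_pow_eq hw hc
    have : w.1 = v.1 := by omega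
    exact Prod.ext this.symm hab
  · obtain ⟨d, hd⟩ : ∃ d, v.1 = d + w.1 := ⟨v.1 - w.1, (Nat.sub_add_cancel hle).symm⟩
    rw [hd, pow_add, ← mul_assoc] at hn
    have hc := Nat.eq_of_mul_eq_mul_right (by positivity : 0 < 2 ^ w.1) hn.symm
    obtain ⟨hd0, hab⟩ := odd_mul_pow_eq hv hc
    have : v.1 = w.1 := by omega
    exact Prod.ext this (hab.symm)

/-- Key dyadic lemma: a grid point of level ≤ v.1 strictly inside the open dyadic
cell of `v` must be `v` itself. -/
lemma cell_unique {v w : ℕ × ℕ} (hv : Odd v.2) (hw : Odd w.2) (hlw : w.1 ≤ v.1)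
    (h1 : av v < mv w) (h2 : mv w < bv v) : w = v := by
  obtain ⟨d, hd⟩ : ∃ d, v.1 = d + w.1 := ⟨v.1 - w.1, (Nat.sub_add_cancel hlw).symm⟩
  set n : ℕ := w.2 * 2 ^ d with hn
  have key : ((n : ℝ)) = mv w * 2 ^ v.1 := by
    rw [hn]
    unfold mv
    rw [hd, pow_add]
    push_cast
    field_simp
  have hp : (0:ℝ) < 2 ^ v.1 := two_pow_pos v.1
  have hlow : ((v.2 : ℝ) - 1) < n := by
    rw [key]
    unfold av at h1
    calc ((v.2:ℝ) - 1) = ((v.2:ℝ)-1)/2^v.1 * 2^v.1 := by field_simp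
    _ < mv w * 2 ^ v.1 := by apply mul_lt_mul_of_pos_right h1 hp
  have hhigh : (n : ℝ) < (v.2 : ℝ) + 1 := by
    rw [key]
    unfold bv at h2
    calc mv w * 2^v.1 < ((v.2:ℝ)+1)/2^v.1 * 2^v.1 := by apply mul_lt_mul_of_pos_right h2 hp
    _ = (v.2:ℝ) + 1 := by field_simp
  have hne : n = v.2 := by
    have l1 : v.2 < n + 1 := by exact_mod_cast (by push_cast; linarith : ((v.2:ℕ):ℝ) < (n:ℝ) + 1)
    have l2 : n < v.2 + 1 := by exact_mod_cast (by push_cast; linarith : ((n:ℕ):ℝ) < (v.2:ℝ) + 1)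
    omega
  obtain ⟨hd0, hab⟩ := odd_mul_pow_eq hv hne
  exact Prod.ext (by omega) hab

/-- Existence of the left neighbour grid point. -/
lemma exists_left {L : ℕ} {v : ℕ × ℕ} (hv : dhfS L v) (h1 : 1 < v.2) :
    ∃ w : ℕ × ℕ, dhfS L w ∧ mv w = av v ∧ w.1 < v.1 := by
  obtain ⟨hv1, hvL, hvo, hv2, hv3⟩ := hv
  have hne : v.2 - 1 ≠ 0 := by omega
  obtain ⟨t, j, hj, hjt⟩ := Nat.exists_eq_two_pow_mul_odd hne
  have hjpos : 1 ≤ j := hj.pos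
  have heven : Even (v.2 - 1) := Nat.Odd.sub_odd hvo odd_one
  have htpos : 1 ≤ t := by
    by_contra h
    have ht0 : t = 0 := by omega
    rw [ht0, pow_zero, one_mul] at hjt
    rcases hj with ⟨c, hc⟩
    rcases heven with ⟨e, he⟩
    omega
  have hlt : 2 ^ t ≤ v.2 - 1 := by
    calc 2 ^ t ≤ 2 ^ t * j := Nat.le_mul_of_pos_right _ hjpos
    _ = v.2 - 1 := hjt.symm
  have htv : t < v.1 := by
    have : 2 ^ t < 2 ^ v.1 := by
      have h2 : (2:ℕ) ≤ 2 ^ v.1 := by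
        calc (2:ℕ) = 2^1 := rfl
        _ ≤ 2 ^ v.1 := Nat.pow_le_pow_right (by norm_num) hv1
      omega
    exact (Nat.pow_lt_pow_iff_right (by norm_num)).mp this
  refine ⟨(v.1 - t, j), ⟨by omega, by omega, hj, hjpos, ?_⟩, ?_, by omega⟩
  · -- bound
    show j ≤ 2 ^ (v.1 - t) - 1
    have hjlt : j * 2 ^ t < 2 ^ v.1 := by
      calc j * 2 ^ t = v.2 - 1 := by rw [mul_comm]; exact hjt.symm
      _ < 2 ^ v.1 := by
        have h2 : (1:ℕ) ≤ 2 ^ v.1 := Nat.one_le_two_pow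
        omega
    have : j < 2 ^ (v.1 - t) := by
      have hsplit : 2 ^ v.1 = 2 ^ (v.1 - t) * 2 ^ t := by
        rw [← pow_add]
        congr 1
        omega
      rw [hsplit] at hjlt
      exact Nat.lt_of_mul_lt_mul_right hjlt
    omega
  · -- mv w = av v
    show (j:ℝ)/2^(v.1 - t) = ((v.2:ℝ) - 1)/2^v.1
    have hcast : ((v.2:ℝ) - 1) = (2:ℝ) ^ t * j := by
      have h' : ((v.2 - 1 : ℕ) : ℝ) = ((2 ^ t * j : ℕ) : ℝ) := by exact_mod_cast congrArg (Nat.cast : ℕ → ℝ) hjt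
      rw [Nat.cast_sub hv2] at h'
      push_cast at h'
      linarith
    have hsplit : (2:ℝ) ^ v.1 = 2 ^ (v.1 - t) * 2 ^ t := by
      rw [← pow_add]
      congr 1
      omega
    rw [hcast, hsplit]
    field_simp

/-- Existence of the right neighbour grid point. -/
lemma exists_right {L : ℕ} {v : ℕ × ℕ} (hv : dhfS L v) (h1 : v.2 < 2 ^ v.1 - 1) :
    ∃ w : ℕ × ℕ, dhfS L w ∧ mv w = bv v ∧ w.1 < v.1 := by
  obtain ⟨hv1, hvL, hvo, hv2, hv3⟩ := hv
  have hne : v.2 + 1 ≠ 0 := by omega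
  obtain ⟨t, j, hj, hjt⟩ := Nat.exists_eq_two_pow_mul_odd hne
  have hjpos : 1 ≤ j := hj.pos
  have heven : Even (v.2 + 1) := Odd.add_one hvo
  have htpos : 1 ≤ t := by
    by_contra h
    have ht0 : t = 0 := by omega
    rw [ht0, pow_zero, one_mul] at hjt
    rcases hj with ⟨c, hc⟩
    rcases heven with ⟨e, he⟩
    omega
  have hjlt : j * 2 ^ t < 2 ^ v.1 := by
    have h2 : (1:ℕ) ≤ 2 ^ v.1 := Nat.one_le_two_pow
    calc j * 2 ^ t = v.2 + 1 := by rw [mul_comm]; exact hjt.symm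
    _ < 2 ^ v.1 := by omega
  have htv : t < v.1 := by
    have : 2 ^ t < 2 ^ v.1 := by
      have := Nat.le_mul_of_pos_left (2^t) hjpos
      omega
    exact (Nat.pow_lt_pow_iff_right (by norm_num)).mp this
  refine ⟨(v.1 - t, j), ⟨by omega, by omega, hj, hjpos, ?_⟩, ?_, by omega⟩
  · show j ≤ 2 ^ (v.1 - t) - 1
    have : j < 2 ^ (v.1 - t) := by
      have hsplit : 2 ^ v.1 = 2 ^ (v.1 - t) * 2 ^ t := by
        rw [← pow_add]; congr 1; omega
      rw [hsplit] at hjlt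
      exact Nat.lt_of_mul_lt_mul_right hjlt
    omega
  · show (j:ℝ)/2^(v.1 - t) = ((v.2:ℝ) + 1)/2^v.1
    have hcast : ((v.2:ℝ) + 1) = (2:ℝ) ^ t * j := by
      have h' : ((v.2 + 1 : ℕ) : ℝ) = ((2 ^ t * j : ℕ) : ℝ) :=
        congrArg (Nat.cast : ℕ → ℝ) hjt
      push_cast at h'
      linarith
    have hsplit : (2:ℝ) ^ v.1 = 2 ^ (v.1 - t) * 2 ^ t := by
      rw [← pow_add]; congr 1; omega
    rw [hcast, hsplit]
    field_simp

noncomputable def p' (p : ℝ → ℝ) (x : ℝ) : ℝ := if x = 0 then 0 else if x = 1 then 1 else p x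
noncomputable def q' (q : ℝ → ℝ) (x : ℝ) : ℝ := if x = 0 then 1 else if x = 1 then 0 else q x
noncomputable def Dd (p q : ℝ → ℝ) (x y : ℝ) : ℝ := p' p x * q' q y - p' p y * q' q x

lemma p'_eq (p : ℝ → ℝ) {x : ℝ} (h0 : x ≠ 0) (h1 : x ≠ 1) : p' p x = p x := by
  simp [p', h0, h1]
lemma q'_eq (q : ℝ → ℝ) {x : ℝ} (h0 : x ≠ 0) (h1 : x ≠ 1) : q' q x = q x := by
  simp [q', h0, h1]

lemma keyP (p q : ℝ → ℝ) (x y z : ℝ) :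
    p' p x * Dd p q y z - p' p y * Dd p q x z + p' p z * Dd p q x y = 0 := by
  simp only [Dd]; ring
lemma keyQ (p q : ℝ → ℝ) (x y z : ℝ) :
    q' q x * Dd p q y z - q' q y * Dd p q x z + q' q z * Dd p q x y = 0 := by
  simp only [Dd]; ring
lemma keyDiag (p q : ℝ → ℝ) (x y z : ℝ) :
    (p' p x * q' q y) * Dd p q y z + (p' p y * q' q y) * (-(Dd p q x z))
      + (p' p y * q' q z) * Dd p q x y = Dd p q x y * Dd p q y z := by
  simp only [Dd]; ring

noncomputable def coef (p q : ℝ → ℝ) (v : ℕ × ℕ) (y : ℝ) : ℝ :=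
  if y = av v then Dd p q (mv v) (bv v)
  else if y = mv v then -(Dd p q (av v) (bv v))
  else if y = bv v then Dd p q (av v) (mv v)
  else 0

lemma coef_cases (p q : ℝ → ℝ) (v : ℕ × ℕ) (y : ℝ) :
    coef p q v y = (if y = av v then Dd p q (mv v) (bv v) else 0)
      + (if y = mv v then -(Dd p q (av v) (bv v)) else 0)
      + (if y = bv v then Dd p q (av v) (mv v) else 0) := by
  have e1 := av_lt_mv v
  have e2 := mv_lt_bv v
  unfold coef
  split_ifs <;> simp_all <;> linarith

lemma coef_support {p q : ℝ → ℝ} {v : ℕ × ℕ} {y : ℝ} (h : coef p q v y ≠ 0) :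
    y = av v ∨ y = mv v ∨ y = bv v := by
  unfold coef at h
  split_ifs at h <;> tauto

lemma sum_pick_eq {S : Finset (ℕ × ℕ)} (hodd : ∀ u ∈ S, Odd u.2) (f : ℝ → ℝ) (t c : ℝ)
    (w0 : ℕ × ℕ) (hw0 : w0 ∈ S) (hc : mv w0 = c) :
    (∑ u : ↥S, (if mv u.1 = c then f (mv u.1) * t else 0)) = f c * t := by
  rw [Finset.sum_eq_single (⟨w0, hw0⟩ : ↥S)]
  · simp [hc]
  · intro b _ hb
    rw [if_neg]
    intro h
    exact hb (Subtype.ext (mv_inj (hodd b.1 b.2) (hodd w0 hw0) (h.trans hc.symm)))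
  · intro h
    exact absurd (Finset.mem_univ _) h

lemma sum_pick_ne {S : Finset (ℕ × ℕ)} (f : ℝ → ℝ) (t c : ℝ)
    (h : ∀ u ∈ S, mv u ≠ c) :
    (∑ u : ↥S, (if mv u.1 = c then f (mv u.1) * t else 0)) = 0 := by
  apply Finset.sum_eq_zero
  intro u _
  rw [if_neg (h u.1 u.2)]

lemma sum_coef {L : ℕ} {S : Finset (ℕ × ℕ)} (hS : ∀ v, v ∈ S ↔ dhfS L v)
    (p q : ℝ → ℝ) {v : ℕ × ℕ} (hv : dhfS L v) (f : ℝ → ℝ) :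
    (∑ u : ↥S, f (mv u.1) * coef p q v (mv u.1))
      = (if 1 < v.2 then f (av v) * Dd p q (mv v) (bv v) else 0)
        + f (mv v) * (-(Dd p q (av v) (bv v)))
        + (if v.2 < 2 ^ v.1 - 1 then f (bv v) * Dd p q (av v) (mv v) else 0) := by
  have hodd : ∀ u ∈ S, Odd u.2 := fun u hu => ((hS u).mp hu).2.2.1
  have hsplit : ∀ u : ↥S, f (mv u.1) * coef p q v (mv u.1)
      = (if mv u.1 = av v then f (mv u.1) * Dd p q (mv v) (bv v) else 0)
        + (if mv u.1 = mv v then f (mv u.1) * (-(Dd p q (av v) (bv v))) else 0)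
        + (if mv u.1 = bv v then f (mv u.1) * Dd p q (av v) (mv v) else 0) := by
    intro u
    rw [coef_cases]
    simp only [mul_add, mul_ite, mul_zero]
  rw [Finset.sum_congr rfl (fun u _ => hsplit u), Finset.sum_add_distrib,
    Finset.sum_add_distrib]
  congr 1
  · congr 1
    · -- av term
      by_cases h : 1 < v.2
      · obtain ⟨w, hw, hwm, _⟩ := exists_left hv h
        rw [if_pos h]
        exact sum_pick_eq hodd f _ _ w ((hS w).mpr hw) hwm
      · have h1 := hv.2.2.2.1
        have hv2 : v.2 = 1 := by omega
        rw [if_neg h]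
        apply sum_pick_ne
        intro u hu
        have := mv_pos ((hS u).mp hu).2.2.2.1
        rw [av_eq_zero hv2]
        linarith
    · -- mv term
      exact sum_pick_eq hodd f _ _ v ((hS v).mpr hv) rfl
  · -- bv term
    by_cases h : v.2 < 2 ^ v.1 - 1
    · obtain ⟨w, hw, hwm, _⟩ := exists_right hv h
      rw [if_pos h]
      exact sum_pick_eq hodd f _ _ w ((hS w).mpr hw) hwm
    · have hv2 : v.2 = 2 ^ v.1 - 1 := by
        have := hv.2.2.2.2
        omega
      rw [if_neg h]
      apply sum_pick_ne
      intro u hu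
      have := mv_lt_one ((hS u).mp hu).2.2.2.2
      rw [bv_eq_one hv.1 hv2]
      linarith

lemma bv_pos (v : ℕ × ℕ) : 0 < bv v := by
  unfold bv
  apply div_pos _ (two_pow_pos v.1)
  positivity

lemma one_lt_of_av_pos {v : ℕ × ℕ} (h : 0 < av v) : 1 < v.2 := by
  by_contra hc
  push_neg at hc
  interval_cases h2 : v.2
  · unfold av at h
    simp at h
    have := two_pow_pos v.1
    nlinarith [h]
  · rw [av_eq_zero h2] at h
    exact lt_irrefl _ h

lemma lt_of_bv_lt_one {v : ℕ × ℕ} (h1 : 1 ≤ v.1) (h2 : v.2 ≤ 2 ^ v.1 - 1)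
    (h : bv v < 1) : v.2 < 2 ^ v.1 - 1 := by
  by_contra hc
  have : v.2 = 2 ^ v.1 - 1 := by omega
  rw [bv_eq_one h1 this] at h
  exact lt_irrefl _ h

noncomputable def sv (p q : ℝ → ℝ) (v : ℕ × ℕ) : ℝ :=
  (Real.sqrt (-(Dd p q (av v) (bv v)) * (Dd p q (av v) (mv v) * Dd p q (mv v) (bv v))))⁻¹
end DHF

open DHF in
/-- With the notation of Statement 4, there is an upper-triangular
(in lexicographic order) inverse Cholesky factor `C` of the Markov-kernel matrix `K`
on the sorted level-`L` dyadic points, with at most `3` nonzero entries per column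
and `Cᵀ K C = 1`, such that moreover for every `x ∈ (0,1)` the hierarchical feature
vector `φ(x) = k(x, X) C` has at most `L` nonzero entries; more precisely,
`φ_{(ℓ,i)}(x) ≠ 0` implies `(i-1)·2^{-ℓ} < x < (i+1)·2^{-ℓ}`. -/
theorem dyadic_hierarchical_features_sparse
    (L : ℕ) (hL : 1 ≤ L)
    (p q : ℝ → ℝ)
    (hp : ∀ x ∈ Set.Ioo (0 : ℝ) 1, 0 < p x)
    (hq : ∀ x ∈ Set.Ioo (0 : ℝ) 1, 0 < q x)
    (hpq : StrictMonoOn (fun x => p x / q x) (Set.Ioo (0 : ℝ) 1))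
    (S : Finset (ℕ × ℕ))
    (hS : ∀ v : ℕ × ℕ, v ∈ S ↔ 1 ≤ v.1 ∧ v.1 ≤ L ∧ Odd v.2 ∧ 1 ≤ v.2 ∧ v.2 ≤ 2 ^ v.1 - 1)
    (pt : ℕ × ℕ → ℝ) (hpt : ∀ v, pt v = (v.2 : ℝ) / 2 ^ v.1)
    (k : ℝ → ℝ → ℝ) (hk : ∀ x y, k x y = p (min x y) * q (max x y))
    (K : Matrix ↥S ↥S ℝ)
    (hK : ∀ a b : ↥S, K a b = k (pt a.1) (pt b.1)) :
    ∃ C : Matrix ↥S ↥S ℝ,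
      (∀ a b : ↥S, (b.1.1 < a.1.1 ∨ (b.1.1 = a.1.1 ∧ b.1.2 < a.1.2)) → C a b = 0) ∧
      (∀ b : ↥S, (Finset.univ.filter fun a : ↥S => C a b ≠ 0).card ≤ 3) ∧
      Cᵀ * K * C = 1 ∧
      (∀ x ∈ Set.Ioo (0 : ℝ) 1,
        (Finset.univ.filter fun a : ↥S =>
          (∑ b : ↥S, k x (pt b.1) * C b a) ≠ 0).card ≤ L) ∧
      (∀ x ∈ Set.Ioo (0 : ℝ) 1, ∀ a : ↥S,
        (∑ b : ↥S, k x (pt b.1) * C b a) ≠ 0 →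
          ((a.1.2 : ℝ) - 1) / 2 ^ a.1.1 < x ∧ x < ((a.1.2 : ℝ) + 1) / 2 ^ a.1.1) := by
  classical
  have hSd : ∀ v : ℕ × ℕ, v ∈ S ↔ dhfS L v := hS
  have hptm : ∀ u : ℕ × ℕ, pt u = mv u := hpt
  have hmem : ∀ u : ↥S, dhfS L u.1 := fun u => (hSd u.1).mp u.2
  have hIoo : ∀ v : ℕ × ℕ, dhfS L v → mv v ∈ Set.Ioo (0:ℝ) 1 :=
    fun v hv => ⟨mv_pos hv.2.2.2.1, mv_lt_one hv.2.2.2.2⟩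
  have hksymm : ∀ x y, k x y = k y x := by
    intro x y; rw [hk, hk, min_comm, max_comm]
  -- negativity of the cross-determinants
  have hDdneg : ∀ x y : ℝ, 0 ≤ x → x < y → y ≤ 1 → Dd p q x y < 0 := by
    intro x y hx0 hxy hy1
    by_cases hx : x = 0
    · by_cases hy : y = 1
      · subst hx; subst hy
        norm_num [DHF.Dd, DHF.p', DHF.q']
      · have hy0 : y ≠ 0 := ne_of_gt (lt_of_le_of_lt hx0 (hx ▸ hxy))
        have hyI : y ∈ Set.Ioo (0:ℝ) 1 := ⟨hx ▸ hxy, lt_of_le_of_ne hy1 hy⟩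
        subst hx
        have : Dd p q 0 y = -(p y) := by
          simp [DHF.Dd, DHF.p', DHF.q', hy0, hy]
        rw [this]
        linarith [hp y hyI]
    · by_cases hy : y = 1
      · have hx1 : x ≠ 1 := ne_of_lt (hy ▸ hxy)
        have hxI : x ∈ Set.Ioo (0:ℝ) 1 := ⟨lt_of_le_of_ne hx0 (Ne.symm hx), hy ▸ hxy⟩
        subst hy
        have : Dd p q x 1 = -(q x) := by
          simp [DHF.Dd, DHF.p', DHF.q', hx, hx1]
        rw [this]
        linarith [hq x hxI]
      · have hxI : x ∈ Set.Ioo (0:ℝ) 1 :=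
          ⟨lt_of_le_of_ne hx0 (Ne.symm hx), hxy.trans_le (lt_of_le_of_ne hy1 hy).le⟩
        have hyI : y ∈ Set.Ioo (0:ℝ) 1 := ⟨lt_of_le_of_lt hx0 hxy, lt_of_le_of_ne hy1 hy⟩
        have hd := hpq hxI hyI hxy
        simp only at hd
        rw [div_lt_div_iff₀ (hq x hxI) (hq y hyI)] at hd
        unfold DHF.Dd
        rw [p'_eq p hx (ne_of_lt hxI.2), p'_eq p (ne_of_gt hyI.1) hy,
          q'_eq q hx (ne_of_lt hxI.2), q'_eq q (ne_of_gt hyI.1) hy]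
        linarith
  have hABs : ∀ v : ℕ × ℕ, dhfS L v →
      Dd p q (av v) (mv v) < 0 ∧ Dd p q (mv v) (bv v) < 0 ∧ Dd p q (av v) (bv v) < 0 := by
    intro v hv
    have h1 := av_nonneg hv.2.2.2.1
    have h2 := av_lt_mv v
    have h3 := mv_lt_bv v
    have h4 := bv_le_one hv.2.2.2.2
    have h5 : mv v ≤ 1 := (mv_lt_one hv.2.2.2.2).le
    exact ⟨hDdneg _ _ h1 h2 h5, hDdneg _ _ (mv_pos hv.2.2.2.1).le h3 h4,
      hDdneg _ _ h1 (h2.trans h3) h4⟩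
  have hXpos : ∀ v : ℕ × ℕ, dhfS L v →
      0 < -(Dd p q (av v) (bv v)) * (Dd p q (av v) (mv v) * Dd p q (mv v) (bv v)) := by
    intro v hv
    obtain ⟨h1, h2, h3⟩ := hABs v hv
    exact mul_pos (neg_pos.mpr h3) (mul_pos_of_neg_of_neg h1 h2)
  have hsv : ∀ v : ℕ × ℕ, dhfS L v → 0 < sv p q v ∧
      sv p q v * sv p q v *
        (-(Dd p q (av v) (bv v)) * (Dd p q (av v) (mv v) * Dd p q (mv v) (bv v))) = 1 := by
    intro v hv
    have hX := hXpos v hv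
    constructor
    · unfold DHF.sv
      exact inv_pos.mpr (Real.sqrt_pos.mpr hX)
    · unfold DHF.sv
      rw [← mul_inv, Real.mul_self_sqrt hX.le, inv_mul_cancel₀ (ne_of_gt hX)]
  -- vanishing of the unscaled feature to the right of the cell
  have hV1 : ∀ v : ℕ × ℕ, dhfS L v → ∀ x ∈ Set.Ioo (0:ℝ) 1, bv v ≤ x →
      (∑ b : ↥S, k x (mv b.1) * coef p q v (mv b.1)) = 0 := by
    intro v hv x hx hbx
    have hb1 : bv v < 1 := lt_of_le_of_lt hbx hx.2
    have havbv : av v < bv v := (av_lt_mv v).trans (mv_lt_bv v)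
    have hstep : ∀ b : ↥S, k x (mv b.1) * coef p q v (mv b.1)
        = q x * (p (mv b.1) * coef p q v (mv b.1)) := by
      intro b
      by_cases hc : coef p q v (mv b.1) = 0
      · rw [hc]; ring
      · have hle : mv b.1 ≤ x := by
          rcases coef_support hc with h | h | h <;> rw [h] <;>
            [linarith [havbv]; linarith [mv_lt_bv v]; linarith]
        rw [hk, min_eq_right hle, max_eq_left hle]
        ring
    rw [Finset.sum_congr rfl (fun b _ => hstep b), ← Finset.mul_sum]
    have hzero : (∑ b : ↥S, p (mv b.1) * coef p q v (mv b.1)) = 0 := by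
      rw [sum_coef hSd p q hv p]
      have hKP := keyP p q (av v) (mv v) (bv v)
      have hmv' : p' p (mv v) = p (mv v) :=
        p'_eq p (ne_of_gt (mv_pos hv.2.2.2.1)) (ne_of_lt (mv_lt_one hv.2.2.2.2))
      have hbv' : p' p (bv v) = p (bv v) :=
        p'_eq p (ne_of_gt (bv_pos v)) (ne_of_lt hb1)
      have hcond : v.2 < 2 ^ v.1 - 1 := lt_of_bv_lt_one hv.1 hv.2.2.2.2 hb1
      rw [if_pos hcond]
      by_cases h2 : 1 < v.2
      · rw [if_pos h2]
        have hav' : p' p (av v) = p (av v) :=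
          p'_eq p (ne_of_gt (av_pos h2))
            (ne_of_lt (lt_trans (av_lt_mv v) (mv_lt_one hv.2.2.2.2)))
        rw [← hav', ← hmv', ← hbv']
        linarith [hKP]
      · have h1 := hv.2.2.2.1
        have hv2 : v.2 = 1 := by omega
        rw [if_neg h2]
        have hz : p' p (av v) = 0 := by rw [av_eq_zero hv2]; simp [DHF.p']
        rw [hz, zero_mul] at hKP
        rw [← hmv', ← hbv']
        linarith [hKP]
    rw [hzero, mul_zero]
  -- vanishing of the unscaled feature to the left of the cell
  have hV2 : ∀ v : ℕ × ℕ, dhfS L v → ∀ x ∈ Set.Ioo (0:ℝ) 1, x ≤ av v →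
      (∑ b : ↥S, k x (mv b.1) * coef p q v (mv b.1)) = 0 := by
    intro v hv x hx hax
    have ha0 : 0 < av v := lt_of_lt_of_le hx.1 hax
    have h2 : 1 < v.2 := one_lt_of_av_pos ha0
    have havmv := av_lt_mv v
    have hmvbv := mv_lt_bv v
    have hstep : ∀ b : ↥S, k x (mv b.1) * coef p q v (mv b.1)
        = p x * (q (mv b.1) * coef p q v (mv b.1)) := by
      intro b
      by_cases hc : coef p q v (mv b.1) = 0
      · rw [hc]; ring
      · have hle : x ≤ mv b.1 := by
          rcases coef_support hc with h | h | h <;> rw [h] <;> linarith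
        rw [hk, min_eq_left hle, max_eq_right hle]
        ring
    rw [Finset.sum_congr rfl (fun b _ => hstep b), ← Finset.mul_sum]
    have hzero : (∑ b : ↥S, q (mv b.1) * coef p q v (mv b.1)) = 0 := by
      rw [sum_coef hSd p q hv q]
      have hKQ := keyQ p q (av v) (mv v) (bv v)
      have hmv1 : mv v < 1 := mv_lt_one hv.2.2.2.2
      have hmv' : q' q (mv v) = q (mv v) :=
        q'_eq q (ne_of_gt (mv_pos hv.2.2.2.1)) (ne_of_lt hmv1)
      have hav' : q' q (av v) = q (av v) :=
        q'_eq q (ne_of_gt ha0) (ne_of_lt (lt_trans havmv hmv1))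
      rw [if_pos h2]
      by_cases h3 : v.2 < 2 ^ v.1 - 1
      · rw [if_pos h3]
        have hbv' : q' q (bv v) = q (bv v) :=
          q'_eq q (ne_of_gt (bv_pos v)) (ne_of_lt (bv_lt_one h3))
        rw [← hav', ← hmv', ← hbv']
        linarith [hKQ]
      · have hv3 := hv.2.2.2.2
        have hv2 : v.2 = 2 ^ v.1 - 1 := by omega
        rw [if_neg h3]
        have hz : q' q (bv v) = 0 := by rw [bv_eq_one hv.1 hv2]; simp [DHF.q']
        rw [hz, zero_mul] at hKQ
        rw [← hav', ← hmv']
        linarith [hKQ]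
    rw [hzero, mul_zero]
  have hVout : ∀ v : ℕ × ℕ, dhfS L v → ∀ x ∈ Set.Ioo (0:ℝ) 1,
      ¬(av v < x ∧ x < bv v) →
      (∑ b : ↥S, k x (mv b.1) * coef p q v (mv b.1)) = 0 := by
    intro v hv x hx h
    rcases not_and_or.mp h with h1 | h2
    · exact hV2 v hv x hx (not_lt.mp h1)
    · exact hV1 v hv x hx (not_lt.mp h2)
  -- diagonal value of the unscaled feature
  have hdiag : ∀ v : ℕ × ℕ, dhfS L v →
      (∑ b : ↥S, k (mv v) (mv b.1) * coef p q v (mv b.1))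
        = Dd p q (av v) (mv v) * Dd p q (mv v) (bv v) := by
    intro v hv
    have havmv := av_lt_mv v
    have hmvbv := mv_lt_bv v
    have hmv0 : 0 < mv v := mv_pos hv.2.2.2.1
    have hmv1 : mv v < 1 := mv_lt_one hv.2.2.2.2
    rw [sum_coef hSd p q hv (fun y => k (mv v) y)]
    have hKD := keyDiag p q (av v) (mv v) (bv v)
    have hpm : p' p (mv v) = p (mv v) := p'_eq p (ne_of_gt hmv0) (ne_of_lt hmv1)
    have hqm : q' q (mv v) = q (mv v) := q'_eq q (ne_of_gt hmv0) (ne_of_lt hmv1)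
    have hkmm : k (mv v) (mv v) = p (mv v) * q (mv v) := by
      rw [hk, min_self, max_self]
    by_cases h2 : 1 < v.2
    · have hkma : k (mv v) (av v) = p (av v) * q (mv v) := by
        rw [hk, min_eq_right havmv.le, max_eq_left havmv.le]
      have hpa : p' p (av v) = p (av v) :=
        p'_eq p (ne_of_gt (av_pos h2)) (ne_of_lt (lt_trans havmv hmv1))
      rw [if_pos h2]
      by_cases h3 : v.2 < 2 ^ v.1 - 1
      · have hkmb : k (mv v) (bv v) = p (mv v) * q (bv v) := by
          rw [hk, min_eq_left hmvbv.le, max_eq_right hmvbv.le]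
        have hqb : q' q (bv v) = q (bv v) :=
          q'_eq q (ne_of_gt (bv_pos v)) (ne_of_lt (bv_lt_one h3))
        rw [if_pos h3, hkma, hkmm, hkmb, ← hpa, ← hpm, ← hqm, ← hqb]
        linarith [hKD]
      · have hz : q' q (bv v) = 0 := by
          have h4 := hv.2.2.2.2
          rw [bv_eq_one hv.1 (by omega : v.2 = 2 ^ v.1 - 1)]; simp [DHF.q']
        rw [hz, mul_zero, zero_mul] at hKD
        rw [if_neg h3, hkma, hkmm, ← hpa, ← hpm, ← hqm]
        linarith [hKD]
    · have hz : p' p (av v) = 0 := by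
        have h1 := hv.2.2.2.1
        rw [av_eq_zero (by omega : v.2 = 1)]; simp [DHF.p']
      rw [hz, zero_mul, zero_mul] at hKD
      rw [if_neg h2]
      by_cases h3 : v.2 < 2 ^ v.1 - 1
      · have hkmb : k (mv v) (bv v) = p (mv v) * q (bv v) := by
          rw [hk, min_eq_left hmvbv.le, max_eq_right hmvbv.le]
        have hqb : q' q (bv v) = q (bv v) :=
          q'_eq q (ne_of_gt (bv_pos v)) (ne_of_lt (bv_lt_one h3))
        rw [if_pos h3, hkmm, hkmb, ← hpm, ← hqm, ← hqb]
        linarith [hKD]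
      · have hz2 : q' q (bv v) = 0 := by
          have h4 := hv.2.2.2.2
          rw [bv_eq_one hv.1 (by omega : v.2 = 2 ^ v.1 - 1)]; simp [DHF.q']
        rw [hz2, mul_zero, zero_mul] at hKD
        rw [if_neg h3, hkmm, ← hpm, ← hqm]
        linarith [hKD]
  -- the inverse Cholesky factor
  set Cm : Matrix ↥S ↥S ℝ :=
    Matrix.of (fun u v : ↥S => sv p q v.1 * coef p q v.1 (mv u.1)) with hCmeq
  have hCapp : ∀ u v : ↥S, Cm u v = sv p q v.1 * coef p q v.1 (mv u.1) :=
    fun u v => by rw [hCmeq]; rfl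
  have hphi : ∀ (a : ↥S) (x : ℝ), (∑ b : ↥S, k x (pt b.1) * Cm b a)
      = sv p q a.1 * ∑ b : ↥S, k x (mv b.1) * coef p q a.1 (mv b.1) := by
    intro a x
    rw [Finset.mul_sum]
    apply Finset.sum_congr rfl
    intro b _
    rw [hptm, hCapp]
    ring
  have hsup : ∀ x ∈ Set.Ioo (0:ℝ) 1, ∀ a : ↥S,
      (∑ b : ↥S, k x (pt b.1) * Cm b a) ≠ 0 → av a.1 < x ∧ x < bv a.1 := by
    intro x hx a hne
    by_contra hcon
    exact hne (by rw [hphi, hVout a.1 (hmem a) x hx hcon, mul_zero])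
  refine ⟨Cm, ?_, ?_, ?_, ?_, ?_⟩
  · -- upper triangular
    intro a b hlex
    rw [hCapp]
    have key : coef p q b.1 (mv a.1) = 0 := by
      by_contra hc
      rcases coef_support hc with h | h | h
      · have h0 : 0 < av b.1 := by rw [← h]; exact mv_pos (hmem a).2.2.2.1
        have h2 : 1 < b.1.2 := one_lt_of_av_pos h0
        obtain ⟨w, hw, hwm, hwl⟩ := exists_left (hmem b) h2
        have haw : a.1 = w := mv_inj (hmem a).2.2.1 hw.2.2.1 (h.trans hwm.symm)
        have hl : a.1.1 < b.1.1 := by rw [haw]; exact hwl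
        rcases hlex with h' | ⟨h', _⟩ <;> omega
      · have hab : a.1 = b.1 := mv_inj (hmem a).2.2.1 (hmem b).2.2.1 h
        have h1 : a.1.1 = b.1.1 := by rw [hab]
        have h2 : a.1.2 = b.1.2 := by rw [hab]
        rcases hlex with h' | ⟨h', h''⟩ <;> omega
      · have h1 : bv b.1 < 1 := by rw [← h]; exact mv_lt_one (hmem a).2.2.2.2
        have h3 : b.1.2 < 2 ^ b.1.1 - 1 :=
          lt_of_bv_lt_one (hmem b).1 (hmem b).2.2.2.2 h1
        obtain ⟨w, hw, hwm, hwl⟩ := exists_right (hmem b) h3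
        have haw : a.1 = w := mv_inj (hmem a).2.2.1 hw.2.2.1 (h.trans hwm.symm)
        have hl : a.1.1 < b.1.1 := by rw [haw]; exact hwl
        rcases hlex with h' | ⟨h', _⟩ <;> omega
    rw [key, mul_zero]
  · -- at most 3 nonzeros per column
    intro b
    have hsub : (Finset.univ.filter fun a : ↥S => Cm a b ≠ 0).card
        ≤ ({av b.1, mv b.1, bv b.1} : Finset ℝ).card := by
      apply Finset.card_le_card_of_injOn (fun a : ↥S => mv a.1)
      · intro a ha
        rw [Finset.mem_coe, Finset.mem_filter] at ha
        have hc : coef p q b.1 (mv a.1) ≠ 0 := by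
          intro h0
          exact ha.2 (by rw [hCapp, h0, mul_zero])
        rcases coef_support hc with h | h | h <;> simp [h]
      · intro a _ a' _ hEq
        exact Subtype.ext (mv_inj (hmem a).2.2.1 (hmem a').2.2.1 hEq)
    apply le_trans hsub
    apply le_trans (Finset.card_insert_le _ _)
    apply Nat.succ_le_succ
    apply le_trans (Finset.card_insert_le _ _)
    apply Nat.succ_le_succ
    exact le_of_eq (Finset.card_singleton _)
  · -- CᵀKC = 1
    have hinner : ∀ u b : ↥S, (∑ a : ↥S, Cmᵀ u a * K a b)
        = sv p q u.1 * ∑ a : ↥S, k (mv b.1) (mv a.1) * coef p q u.1 (mv a.1) := by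
      intro u b
      rw [Finset.mul_sum]
      apply Finset.sum_congr rfl
      intro a _
      rw [Matrix.transpose_apply, hCapp, hK a b, hptm, hptm, hksymm (mv a.1) (mv b.1)]
      ring
    have hentry : ∀ u v : ↥S, (Cmᵀ * K * Cm) u v
        = sv p q u.1 * sv p q v.1 *
          ∑ b : ↥S, (∑ a : ↥S, k (mv b.1) (mv a.1) * coef p q u.1 (mv a.1))
            * coef p q v.1 (mv b.1) := by
      intro u v
      rw [Matrix.mul_apply, Finset.mul_sum]
      apply Finset.sum_congr rfl
      intro b _
      rw [Matrix.mul_apply, hinner u b, hCapp]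
      ring
    have hOff : ∀ u v : ↥S, u ≠ v → v.1.1 ≤ u.1.1 → (Cmᵀ * K * Cm) u v = 0 := by
      intro u v huv hle
      rw [hentry u v,
        sum_coef hSd p q (hmem v)
          (fun x => ∑ a : ↥S, k x (mv a.1) * coef p q u.1 (mv a.1))]
      have hmzero : (∑ a : ↥S, k (mv v.1) (mv a.1) * coef p q u.1 (mv a.1)) = 0 := by
        by_contra hne
        have hcell : av u.1 < mv v.1 ∧ mv v.1 < bv u.1 := by
          by_contra hcon
          exact hne (hVout u.1 (hmem u) (mv v.1) (hIoo v.1 (hmem v)) hcon)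
        have := cell_unique (hmem u).2.2.1 (hmem v).2.2.1 hle hcell.1 hcell.2
        exact huv (Subtype.ext this).symm
      have hfirst : (if 1 < v.1.2 then
          (∑ a : ↥S, k (av v.1) (mv a.1) * coef p q u.1 (mv a.1))
            * Dd p q (mv v.1) (bv v.1) else 0) = 0 := by
        by_cases h2 : 1 < v.1.2
        · rw [if_pos h2]
          obtain ⟨w, hw, hwm, hwl⟩ := exists_left (hmem v) h2
          have hz : (∑ a : ↥S, k (av v.1) (mv a.1) * coef p q u.1 (mv a.1)) = 0 := by
            by_contra hne
            rw [← hwm] at hne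
            have hcell : av u.1 < mv w ∧ mv w < bv u.1 := by
              by_contra hcon
              exact hne (hVout u.1 (hmem u) (mv w) (hIoo w hw) hcon)
            have hwu := cell_unique (hmem u).2.2.1 hw.2.2.1
              (by omega : w.1 ≤ u.1.1) hcell.1 hcell.2
            have : u.1.1 = w.1 := by rw [hwu]
            omega
          rw [hz, zero_mul]
        · rw [if_neg h2]
      have hlast : (if v.1.2 < 2 ^ v.1.1 - 1 then
          (∑ a : ↥S, k (bv v.1) (mv a.1) * coef p q u.1 (mv a.1))
            * Dd p q (av v.1) (mv v.1) else 0) = 0 := by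
        by_cases h3 : v.1.2 < 2 ^ v.1.1 - 1
        · rw [if_pos h3]
          obtain ⟨w, hw, hwm, hwl⟩ := exists_right (hmem v) h3
          have hz : (∑ a : ↥S, k (bv v.1) (mv a.1) * coef p q u.1 (mv a.1)) = 0 := by
            by_contra hne
            rw [← hwm] at hne
            have hcell : av u.1 < mv w ∧ mv w < bv u.1 := by
              by_contra hcon
              exact hne (hVout u.1 (hmem u) (mv w) (hIoo w hw) hcon)
            have hwu := cell_unique (hmem u).2.2.1 hw.2.2.1
              (by omega : w.1 ≤ u.1.1) hcell.1 hcell.2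
            have : u.1.1 = w.1 := by rw [hwu]
            omega
          rw [hz, zero_mul]
        · rw [if_neg h3]
      rw [hfirst, hlast, hmzero]
      ring
    have hDiagE : ∀ v : ↥S, (Cmᵀ * K * Cm) v v = 1 := by
      intro v
      rw [hentry v v,
        sum_coef hSd p q (hmem v)
          (fun x => ∑ a : ↥S, k x (mv a.1) * coef p q v.1 (mv a.1))]
      have hmval := hdiag v.1 (hmem v)
      have hfirst : (if 1 < v.1.2 then
          (∑ a : ↥S, k (av v.1) (mv a.1) * coef p q v.1 (mv a.1))
            * Dd p q (mv v.1) (bv v.1) else 0) = 0 := by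
        by_cases h2 : 1 < v.1.2
        · rw [if_pos h2]
          have havI : av v.1 ∈ Set.Ioo (0:ℝ) 1 :=
            ⟨av_pos h2, lt_trans (av_lt_mv v.1) (mv_lt_one (hmem v).2.2.2.2)⟩
          rw [hV2 v.1 (hmem v) (av v.1) havI le_rfl, zero_mul]
        · rw [if_neg h2]
      have hlast : (if v.1.2 < 2 ^ v.1.1 - 1 then
          (∑ a : ↥S, k (bv v.1) (mv a.1) * coef p q v.1 (mv a.1))
            * Dd p q (av v.1) (mv v.1) else 0) = 0 := by
        by_cases h3 : v.1.2 < 2 ^ v.1.1 - 1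
        · rw [if_pos h3]
          have hbvI : bv v.1 ∈ Set.Ioo (0:ℝ) 1 := ⟨bv_pos v.1, bv_lt_one h3⟩
          rw [hV1 v.1 (hmem v) (bv v.1) hbvI le_rfl, zero_mul]
        · rw [if_neg h3]
      rw [hfirst, hlast, hmval]
      have := (hsv v.1 (hmem v)).2
      linear_combination this
    have hKs : Kᵀ = K := by
      ext a b
      rw [Matrix.transpose_apply, hK, hK, hksymm]
    have htr : (Cmᵀ * K * Cm)ᵀ = Cmᵀ * K * Cm := by
      rw [Matrix.transpose_mul, Matrix.transpose_mul, Matrix.transpose_transpose,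
        hKs, ← Matrix.mul_assoc]
    ext u v
    by_cases huv : u = v
    · subst huv
      rw [hDiagE, Matrix.one_apply_eq]
    · rw [Matrix.one_apply_ne huv]
      rcases le_total v.1.1 u.1.1 with h | h
      · exact hOff u v huv h
      · have hsymE : (Cmᵀ * K * Cm) u v = (Cmᵀ * K * Cm) v u := by
          conv_lhs => rw [← htr]
          rw [Matrix.transpose_apply]
        rw [hsymE]
        exact hOff v u (Ne.symm huv) h
  · -- at most L nonzero features
    intro x hx
    have hcard : (Finset.Icc 1 L).card = L := by rw [Nat.card_Icc]; omega
    rw [← hcard]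
    apply Finset.card_le_card_of_injOn (fun a : ↥S => a.1.1)
    · intro a ha
      exact Finset.mem_Icc.mpr ⟨(hmem a).1, (hmem a).2.1⟩
    · intro a ha a' ha' hEq
      simp only [Finset.coe_filter, Set.mem_setOf_eq, Finset.mem_univ, true_and] at ha ha'
      have hEq' : (a : ℕ × ℕ).1 = (a' : ℕ × ℕ).1 := hEq
      obtain ⟨hc1, hc2⟩ := hsup x hx a ha
      obtain ⟨hc1', hc2'⟩ := hsup x hx a' ha'
      apply Subtype.ext
      apply Prod.ext hEq'
      -- same level forces same position
      have h2p := two_pow_pos a.1.1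
      simp only [DHF.av, DHF.bv] at hc1 hc2 hc1' hc2'
      rw [← hEq'] at hc1' hc2'
      have hi1 : (a.1.2 : ℝ) - 1 < (a'.1.2 : ℝ) + 1 := by
        have h := lt_trans hc1 hc2'
        rw [div_lt_div_iff₀ h2p h2p] at h
        exact lt_of_mul_lt_mul_right h h2p.le
      have hi2 : (a'.1.2 : ℝ) - 1 < (a.1.2 : ℝ) + 1 := by
        have h := lt_trans hc1' hc2
        rw [div_lt_div_iff₀ h2p h2p] at h
        exact lt_of_mul_lt_mul_right h h2p.le
      have hn1 : a.1.2 < a'.1.2 + 2 := by exact_mod_cast (by linarith : (a.1.2:ℝ) < (a'.1.2:ℝ) + 2)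
      have hn2 : a'.1.2 < a.1.2 + 2 := by exact_mod_cast (by linarith : (a'.1.2:ℝ) < (a.1.2:ℝ) + 2)
      obtain ⟨c, hc⟩ := (hmem a).2.2.1
      obtain ⟨d, hd⟩ := (hmem a').2.2.1
      omega
  · -- support of the features
    intro x hx a hne
    exact hsup x hx a hne
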